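/- Let n ≥ 2, μ_1,…,μ_n ∈ ℝ, σ_1,…,σ_n > 0, and let X_1,…,X_n be independent random variables with X_i ~ N(μ_i, σ_i²). Set r(x) := (x/∏_{j=1}^n σ_j)^{1/n}. Then there exist c > 0 and x_0 such that for all x ≥ x_0, P( ∏_{i=1}^n X_i > x ) ≥ c · x^{−(n−1)} · exp( −(n/2) r(x)² + r(x) Σ_{i=1}^n μ_i/σ_i ). -/

import Mathlib

open MeasureTheory ProbabilityTheory Finset
open Real
open scoped NNReal ENNReal

lemma gauss_tail (m s r : ℝ) (hs : 0 < s) (hr : 1 ≤ r) (hm : m ≤ s * r) :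
    (s * Real.sqrt (2*Real.pi))⁻¹ *
      Real.exp (-(m^2/(2*s^2) + 1/s + |m|/s^2 + 1/(2*s^2))) * r⁻¹
    * Real.exp (-(r^2/2) + r * (m/s))
    ≤ ((gaussianReal m (Real.toNNReal (s^2))) (Set.Ioi (s*r))).toReal := by
  have hr0 : 0 < r := lt_of_lt_of_le one_pos hr
  have hv : Real.toNNReal (s^2) ≠ 0 := by
    simp only [ne_eq, Real.toNNReal_eq_zero, not_le]; positivity
  have hvc : ((Real.toNNReal (s^2) : ℝ≥0) : ℝ) = s^2 := Real.coe_toNNReal _ (sq_nonneg s)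
  rw [gaussianReal_apply_eq_integral _ hv, ENNReal.toReal_ofReal
    (setIntegral_nonneg measurableSet_Ioi fun u _ => gaussianPDFReal_nonneg _ _ _)]
  set a := s * r with ha
  set b := s * r + r⁻¹ with hb
  have hab : a < b := by simp [ha, hb, inv_pos.mpr hr0]
  set c₀ : ℝ := (s * Real.sqrt (2*Real.pi))⁻¹ * Real.exp (-(b - m)^2/(2*s^2)) with hc₀
  have hsqrt : Real.sqrt (2 * Real.pi * s^2) = s * Real.sqrt (2 * Real.pi) := by
    rw [Real.sqrt_mul (by positivity : (0:ℝ) ≤ 2*Real.pi), Real.sqrt_sq hs.le]; ring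
  have hstep1 : ∫ u in Set.Ioc a b, c₀ ≤ ∫ u in Set.Ioc a b, gaussianPDFReal m (Real.toNNReal (s^2)) u := by
    apply setIntegral_mono_on
    · exact integrableOn_const measure_Ioc_lt_top.ne
    · exact (integrable_gaussianPDFReal _ _).integrableOn
    · exact measurableSet_Ioc
    · intro u hu
      rw [hc₀, gaussianPDFReal, hvc, hsqrt]
      apply mul_le_mul_of_nonneg_left ?_ (by positivity)
      rw [Real.exp_le_exp]
      apply div_le_div_of_nonneg_right ?_ (by positivity)
      have h1 : a - m ≤ u - m := by linarith [hu.1.le]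
      have h2 : u - m ≤ b - m := by linarith [hu.2]
      nlinarith [sub_nonneg.mpr hm]
  have hba : b - a = r⁻¹ := by rw [hb, ha]; ring
  have hconst : ∫ _ in Set.Ioc a b, c₀ = r⁻¹ * c₀ := by
    rw [setIntegral_const, Real.volume_real_Ioc_of_le hab.le,
      hba, smul_eq_mul]
  have hstep2 : ∫ u in Set.Ioc a b, gaussianPDFReal m (Real.toNNReal (s^2)) u
      ≤ ∫ u in Set.Ioi a, gaussianPDFReal m (Real.toNNReal (s^2)) u := by
    apply setIntegral_mono_set (integrable_gaussianPDFReal _ _).integrableOn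
      (ae_of_all _ fun u => gaussianPDFReal_nonneg _ _ _)
    exact HasSubset.Subset.eventuallyLE Set.Ioc_subset_Ioi_self
  have hq : r⁻¹ * r = 1 := inv_mul_cancel₀ hr0.ne'
  have hq1 : r⁻¹ ≤ 1 := inv_le_one_of_one_le₀ hr
  have hq0 : 0 < r⁻¹ := inv_pos.mpr hr0
  have key : (b - m)^2 ≤ (m^2 + 2*s + 2*|m| + 1) + s^2*r^2 - 2*s*(r*m) := by
    rw [hb]
    nlinarith [hq, hq1, hq0.le, neg_abs_le m, le_abs_self m, sq_nonneg r⁻¹,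
      mul_nonneg hq0.le (abs_nonneg m), hs.le]
  have hexp : Real.exp (-(m^2/(2*s^2) + 1/s + |m|/s^2 + 1/(2*s^2))) *
      Real.exp (-(r^2/2) + r * (m/s)) ≤ Real.exp (-(b - m)^2/(2*s^2)) := by
    rw [← Real.exp_add, Real.exp_le_exp]
    have expand : -(m^2/(2*s^2) + 1/s + |m|/s^2 + 1/(2*s^2)) + (-(r^2/2) + r*(m/s))
        = -(((m^2 + 2*s + 2*|m| + 1) + s^2*r^2 - 2*s*(r*m))/(2*s^2)) := by
      field_simp; ring
    rw [expand, show -(b - m)^2/(2*s^2) = -((b-m)^2/(2*s^2)) from by ring, neg_le_neg_iff]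
    exact div_le_div_of_nonneg_right key (by positivity)
  calc (s * Real.sqrt (2*Real.pi))⁻¹ *
      Real.exp (-(m^2/(2*s^2) + 1/s + |m|/s^2 + 1/(2*s^2))) * r⁻¹
      * Real.exp (-(r^2/2) + r * (m/s))
      ≤ r⁻¹ * c₀ := by
        rw [hc₀]
        have := mul_le_mul_of_nonneg_left hexp (by positivity :
          (0:ℝ) ≤ (s * Real.sqrt (2*Real.pi))⁻¹)
        calc _ = ((s * Real.sqrt (2*Real.pi))⁻¹ *
            (Real.exp (-(m^2/(2*s^2) + 1/s + |m|/s^2 + 1/(2*s^2))) *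
              Real.exp (-(r^2/2) + r * (m/s)))) * r⁻¹ := by ring
          _ ≤ ((s * Real.sqrt (2*Real.pi))⁻¹ * Real.exp (-(b - m)^2/(2*s^2))) * r⁻¹ :=
            mul_le_mul_of_nonneg_right this hq0.le
          _ = r⁻¹ * ((s * Real.sqrt (2*Real.pi))⁻¹ * Real.exp (-(b - m)^2/(2*s^2))) := by ring
    _ = ∫ _ in Set.Ioc a b, c₀ := hconst.symm
    _ ≤ ∫ u in Set.Ioc a b, gaussianPDFReal m (Real.toNNReal (s^2)) u := hstep1
    _ ≤ ∫ u in Set.Ioi a, gaussianPDFReal m (Real.toNNReal (s^2)) u := hstep2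

/-- The balanced scale `r(x) = (x / ∏ σ_j)^{1/n}`. -/
noncomputable def rbal (n : ℕ) (σ : Fin n → ℝ) (x : ℝ) : ℝ :=
  (x / ∏ j, σ j) ^ ((1 : ℝ) / n)

theorem product_gaussian_tail_lower_bound
    {Ω : Type*} [MeasureSpace Ω] [IsProbabilityMeasure (ℙ : Measure Ω)]
    (n : ℕ) (hn : 2 ≤ n) (μ σ : Fin n → ℝ) (hσ : ∀ i, 0 < σ i)
    (X : Fin n → Ω → ℝ)
    (hindep : iIndepFun X ℙ)
    (hlaw : ∀ i, Measure.map (X i) ℙ = gaussianReal (μ i) (Real.toNNReal (σ i ^ 2))) :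
    ∃ c > 0, ∃ x₀ : ℝ, ∀ x ≥ x₀,
      c * x ^ (-((n : ℝ) - 1)) *
          Real.exp (-((n : ℝ) / 2) * rbal n σ x ^ 2 + rbal n σ x * ∑ i, μ i / σ i) ≤
        (ℙ {ω | x < ∏ i, X i ω}).toReal := by
  haveI : Nonempty (Fin n) := Fin.pos_iff_nonempty.mp (by omega)
  have hnR : (2:ℝ) ≤ (n:ℝ) := by exact_mod_cast hn
  have hn0 : (n:ℝ) ≠ 0 := by positivity
  set P := ∏ j, σ j with hP
  have hPpos : 0 < P := Finset.prod_pos (fun i _ => hσ i)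
  set c : Fin n → ℝ := fun i => (σ i * Real.sqrt (2*Real.pi))⁻¹ *
    Real.exp (-((μ i)^2/(2*(σ i)^2) + 1/(σ i) + |μ i|/(σ i)^2 + 1/(2*(σ i)^2))) with hc
  have hcpos : ∀ i, 0 < c i := fun i => by
    have := hσ i; rw [hc]; positivity
  set C := ∏ i, c i with hC
  have hCpos : 0 < C := Finset.prod_pos (fun i _ => hcpos i)
  set M : ℝ := 1 + ∑ i, |μ i| / σ i with hM
  have hsumnn : (0:ℝ) ≤ ∑ i, |μ i| / σ i :=
    Finset.sum_nonneg fun i _ => div_nonneg (abs_nonneg _) (hσ i).le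
  have hM1 : 1 ≤ M := by rw [hM]; linarith
  refine ⟨C * P, by positivity, max 1 (P * M^n), fun x hx => ?_⟩
  have hx1 : (1:ℝ) ≤ x := le_trans (le_max_left _ _) hx
  have hx0 : (0:ℝ) < x := by linarith
  have hx2 : P * M^n ≤ x := le_trans (le_max_right _ _) hx
  set r := rbal n σ x with hrdef
  have hxP : M^n ≤ x / P := (le_div_iff₀ hPpos).mpr (by linarith [hx2])
  have hrM : M ≤ r := by
    have h1 : ((M^n : ℝ)) ^ ((1:ℝ)/n) ≤ (x/P) ^ ((1:ℝ)/n) :=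
      Real.rpow_le_rpow (by positivity) hxP (by positivity)
    rwa [← Real.rpow_natCast M n, ← Real.rpow_mul (by linarith : (0:ℝ) ≤ M),
      mul_one_div, div_self hn0, Real.rpow_one] at h1
  have hr1 : 1 ≤ r := le_trans hM1 hrM
  have hr0 : 0 < r := lt_of_lt_of_le one_pos hr1
  have hrn : r ^ n = x / P := by
    rw [hrdef, rbal, ← Real.rpow_natCast _ n,
      ← Real.rpow_mul (div_nonneg hx0.le hPpos.le), one_div,
      inv_mul_cancel₀ hn0, Real.rpow_one]
  have hmi : ∀ i, μ i ≤ σ i * r := by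
    intro i
    have h1 : |μ i| / σ i ≤ M := by
      rw [hM]
      have := Finset.single_le_sum (f := fun i => |μ i| / σ i)
        (fun i _ => div_nonneg (abs_nonneg _) (hσ i).le) (Finset.mem_univ i)
      linarith
    have h2 : |μ i| ≤ σ i * M := by
      rw [mul_comm]
      exact (div_le_iff₀ (hσ i)).mp h1
    calc μ i ≤ |μ i| := le_abs_self _
      _ ≤ σ i * M := h2
      _ ≤ σ i * r := by apply mul_le_mul_of_nonneg_left hrM (hσ i).le
  have hae : ∀ i, AEMeasurable (X i) ℙ := by
    intro i
    by_contra h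
    have h0 := Measure.map_of_not_aemeasurable h
    have h1 := hlaw i
    rw [h0] at h1
    have h2 := congrArg (fun m : Measure ℝ => m Set.univ) h1
    simp at h2
  set t : Fin n → ℝ := fun i => σ i * r with ht
  have hprod_t : ∏ i, t i = x := by
    rw [ht]
    simp only
    rw [Finset.prod_mul_distrib, Finset.prod_const, Finset.card_univ, Fintype.card_fin,
      ← hP, hrn, mul_div_cancel₀ _ hPpos.ne']
  have hsub : (⋂ i, X i ⁻¹' Set.Ioi (t i)) ⊆ {ω | x < ∏ i, X i ω} := by
    intro ω hω
    simp only [Set.mem_iInter, Set.mem_preimage, Set.mem_Ioi] at hω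
    have hlt : ∏ i, t i < ∏ i, X i ω :=
      Finset.prod_lt_prod_of_nonempty (fun i _ => by have := hσ i; positivity)
        (fun i _ => hω i) Finset.univ_nonempty
    rw [hprod_t] at hlt
    exact hlt
  have hmeas_event : ℙ (⋂ i, X i ⁻¹' Set.Ioi (t i)) = ∏ i, ℙ (X i ⁻¹' Set.Ioi (t i)) :=
    hindep.meas_iInter (fun i => ⟨Set.Ioi (t i), measurableSet_Ioi, rfl⟩)
  have hlaw_tail : ∀ i, ℙ (X i ⁻¹' Set.Ioi (t i))
      = gaussianReal (μ i) (Real.toNNReal (σ i ^ 2)) (Set.Ioi (t i)) := by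
    intro i
    rw [← hlaw i, Measure.map_apply_of_aemeasurable (hae i) measurableSet_Ioi]
  have hsum : ∑ i : Fin n, (-(r^2/2) + r * (μ i / σ i))
      = -((n:ℝ)/2) * r^2 + r * ∑ i, μ i / σ i := by
    rw [Finset.sum_add_distrib, Finset.sum_const, Finset.card_univ, Fintype.card_fin,
      ← Finset.mul_sum, nsmul_eq_mul]
    ring
  have hprodeq : ∏ i, (c i * r⁻¹ * Real.exp (-(r^2/2) + r * (μ i / σ i)))
      = C * r⁻¹^n * Real.exp (-((n:ℝ)/2)*r^2 + r * ∑ i, μ i / σ i) := by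
    rw [Finset.prod_mul_distrib, Finset.prod_mul_distrib, Finset.prod_const,
      Finset.card_univ, Fintype.card_fin, ← Real.exp_sum, hsum, hC]
  have hfinal : C * P * x ^ (-((n:ℝ)-1)) ≤ C * r⁻¹^n := by
    have hxinv : x ^ (-((n:ℝ)-1)) ≤ x⁻¹ := by
      rw [← Real.rpow_neg_one x]
      exact Real.rpow_le_rpow_of_exponent_le hx1 (by linarith)
    have hrpow : r⁻¹^n = P * x⁻¹ := by
      rw [inv_pow, hrn]
      field_simp
    rw [hrpow, mul_assoc]
    exact mul_le_mul_of_nonneg_left (mul_le_mul_of_nonneg_left hxinv hPpos.le) hCpos.le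
  calc C * P * x ^ (-((n:ℝ)-1)) * Real.exp (-((n:ℝ)/2) * r^2 + r * ∑ i, μ i / σ i)
      ≤ C * r⁻¹^n * Real.exp (-((n:ℝ)/2) * r^2 + r * ∑ i, μ i / σ i) :=
        mul_le_mul_of_nonneg_right hfinal (Real.exp_nonneg _)
    _ = ∏ i, (c i * r⁻¹ * Real.exp (-(r^2/2) + r * (μ i / σ i))) := hprodeq.symm
    _ ≤ ∏ i, (gaussianReal (μ i) (Real.toNNReal (σ i ^ 2)) (Set.Ioi (t i))).toReal := by
        apply Finset.prod_le_prod
        · intro i _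
          have := hσ i
          have := hcpos i
          positivity
        · intro i _
          exact gauss_tail (μ i) (σ i) r (hσ i) hr1 (hmi i)
    _ = (ℙ (⋂ i, X i ⁻¹' Set.Ioi (t i))).toReal := by
        rw [hmeas_event, ENNReal.toReal_prod]
        exact Finset.prod_congr rfl fun i _ => by rw [hlaw_tail i]
    _ ≤ (ℙ {ω | x < ∏ i, X i ω}).toReal :=
        ENNReal.toReal_mono (measure_ne_top _ _) (measure_mono hsub)
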